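/- Every regular bipartite simple graph (of any cardinal degree λ > 0) admits a perfect matching. -/

import Mathlib

open Cardinal

universe u

/-- A matching of `G` as a set of pairwise disjoint edges. -/
def IsMatchingSet {V : Type u} (G : SimpleGraph V) (M : Set (Sym2 V)) : Prop :=
  M ⊆ G.edgeSet ∧ M.Pairwise fun e f => ∀ v : V, v ∈ e → v ∉ f

section Greedy

variable {W : Type u} (G : SimpleGraph W) (r : W → W → Prop) (wf : WellFounded r)

open Classical in
/-- Transfinite greedy matching: at each vertex `w` (processed in the well-order `r`),
if `w` is not yet covered and has an uncovered neighbor, add an edge. -/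
noncomputable def greedyStep : W → Option (Sym2 W) :=
  wf.fix fun w prev =>
    let C : Set W := {u | ∃ w', ∃ h : r w' w, ∃ e, prev w' h = some e ∧ u ∈ e}
    if h : w ∉ C ∧ (G.neighborSet w \ C).Nonempty then some s(w, h.2.some) else none

/-- The set of vertices covered by edges chosen at stages before `w`. -/
def greedyCovered (w : W) : Set W :=
  {u | ∃ w', ∃ _h : r w' w, ∃ e, greedyStep G r wf w' = some e ∧ u ∈ e}

open Classical in
theorem greedyStep_eq (w : W) :
    greedyStep G r wf w =
      if h : w ∉ greedyCovered G r wf w ∧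
          (G.neighborSet w \ greedyCovered G r wf w).Nonempty
      then some s(w, h.2.some) else none := by
  rw [greedyStep, WellFounded.fix_eq]
  rfl

theorem greedyStep_spec {w : W} {e : Sym2 W} (h : greedyStep G r wf w = some e) :
    w ∈ e ∧ (∀ u ∈ e, u ∉ greedyCovered G r wf w) ∧ e ∈ G.edgeSet := by
  rw [greedyStep_eq] at h
  split_ifs at h with hc
  · obtain ⟨hw, hne⟩ := hc
    have hs := hne.some_mem
    obtain ⟨hadj, hns⟩ := hs
    rw [SimpleGraph.mem_neighborSet] at hadj
    injection h with h
    subst h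
    refine ⟨Sym2.mem_mk_left _ _, ?_, ?_⟩
    · intro u hu
      rcases Sym2.mem_iff.mp hu with rfl | rfl
      · exact hw
      · exact hns
    · exact hadj

theorem greedy_mem_covered {w w' : W} (hr : r w' w) {e : Sym2 W}
    (h : greedyStep G r wf w' = some e) : ∀ u ∈ e, u ∈ greedyCovered G r wf w :=
  fun u hu => ⟨w', hr, e, h, hu⟩

/-- A `Sym2` has at most two members. -/
theorem mk_sym2_members_le (e : Sym2 W) : #{u | u ∈ e} ≤ 2 := by
  induction e with
  | _ a b =>
    have : {u | u ∈ s(a, b)} ⊆ {a, b} := by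
      intro u hu
      rcases Sym2.mem_iff.mp hu with rfl | rfl
      · exact Set.mem_insert _ _
      · exact Set.mem_insert_of_mem _ rfl
    calc #{u | u ∈ s(a, b)} ≤ #({a, b} : Set W) := mk_le_mk_of_subset this
      _ ≤ #({b} : Set W) + 1 := Cardinal.mk_insert_le
      _ ≤ 2 := by rw [Cardinal.mk_singleton]; norm_num

theorem greedyCovered_small {κ : Cardinal.{u}} (hκ : ℵ₀ ≤ κ)
    (hsmall : ∀ w : W, #{x // r x w} < κ) (w : W) :
    #(greedyCovered G r wf w) < κ := by
  have hsub : greedyCovered G r wf w ⊆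
      ⋃ x : {x // r x w}, {u | ∃ e, greedyStep G r wf x.1 = some e ∧ u ∈ e} := by
    rintro u ⟨w', hr, e, he, hu⟩
    exact Set.mem_iUnion.mpr ⟨⟨w', hr⟩, e, he, hu⟩
  cases isEmpty_or_nonempty {x // r x w} with
  | inl h =>
    have : greedyCovered G r wf w ⊆ (∅ : Set W) := by
      rw [Set.iUnion_of_empty] at hsub; exact hsub
    refine lt_of_le_of_lt (mk_le_mk_of_subset this) ?_
    simpa using lt_of_lt_of_le Cardinal.aleph0_pos hκ
  | inr h =>
    refine lt_of_le_of_lt ((mk_le_mk_of_subset hsub).trans (Cardinal.mk_iUnion_le _)) ?_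
    have h2 : (2 : Cardinal) < κ := lt_of_lt_of_le (by exact_mod_cast Cardinal.nat_lt_aleph0 2) hκ
    refine Cardinal.mul_lt_of_lt hκ (hsmall w) (lt_of_le_of_lt ?_ h2)
    refine ciSup_le' fun x => ?_
    rcases hx : greedyStep G r wf x.1 with _ | e
    · have : {u | ∃ e, greedyStep G r wf x.1 = some e ∧ u ∈ e} = ∅ := by
        ext u; simp [hx]
      simp [this]
    · refine le_trans (mk_le_mk_of_subset ?_) (mk_sym2_members_le e)
      rintro u ⟨e', he', hu⟩
      injection he' with he'
      subst he'
      exact hu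

include wf in
theorem greedy_perfect_matching (htri : ∀ a b : W, r a b ∨ a = b ∨ r b a)
    {κ : Cardinal.{u}} (hκ : ℵ₀ ≤ κ) (hreg : ∀ v : W, #(G.neighborSet v) = κ)
    (hsmall : ∀ w : W, #{x // r x w} < κ) :
    ∃ M : Set (Sym2 W), IsMatchingSet G M ∧ ∀ v : W, ∃ e ∈ M, v ∈ e := by
  refine ⟨{e | ∃ w, greedyStep G r wf w = some e}, ⟨?_, ?_⟩, ?_⟩
  · rintro e ⟨w, hw⟩
    exact (greedyStep_spec G r wf hw).2.2
  · rintro e ⟨w, hw⟩ f ⟨w', hw'⟩ hef v hve hvf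
    rcases htri w w' with h | rfl | h
    · -- r w w' : edge e was chosen before w', so its vertices are covered at w'
      exact (greedyStep_spec G r wf hw').2.1 v hvf (greedy_mem_covered G r wf h hw v hve)
    · rw [hw] at hw'
      injection hw' with hw'
      exact hef hw'
    · exact (greedyStep_spec G r wf hw).2.1 v hve (greedy_mem_covered G r wf h hw' v hvf)
  · intro v
    rcases hv : greedyStep G r wf v with _ | e
    · rw [greedyStep_eq] at hv
      split_ifs at hv with hc
      rw [not_and_or] at hc
      rcases hc with hc | hc
      · rw [not_not] at hc
        obtain ⟨w', hr, e, he, hve⟩ := hc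
        exact ⟨e, ⟨w', he⟩, hve⟩
      · exfalso
        rw [Set.not_nonempty_iff_eq_empty, Set.diff_eq_empty] at hc
        have := (mk_le_mk_of_subset hc).trans_lt (greedyCovered_small G r wf hκ hsmall v)
        rw [hreg v] at this
        exact lt_irrefl _ this
    · exact ⟨e, ⟨v, hv⟩, (greedyStep_spec G r wf hv).1⟩

end Greedy

/-- Any graph on at most `κ` vertices, `κ` infinite, in which every vertex has
degree `κ`, has a perfect matching. -/
theorem small_regular_perfect_matching {W : Type u} (G : SimpleGraph W)
    {κ : Cardinal.{u}} (hκ : ℵ₀ ≤ κ) (hreg : ∀ v : W, #(G.neighborSet v) = κ)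
    (hW : #W ≤ κ) :
    ∃ M : Set (Sym2 W), IsMatchingSet G M ∧ ∀ v : W, ∃ e ∈ M, v ∈ e := by
  have : #W ≤ #(κ.ord.ToType) := by rwa [Cardinal.mk_toType, Cardinal.card_ord]
  obtain ⟨ι⟩ := (Cardinal.le_def _ _).mp this
  set r : W → W → Prop := fun a b => ι a < ι b with hr
  have wf : WellFounded r := InvImage.wf ι (IsWellFounded.wf)
  refine greedy_perfect_matching G r wf ?_ hκ hreg ?_
  · intro a b
    rcases lt_trichotomy (ι a) (ι b) with h | h | h
    · exact Or.inl h
    · exact Or.inr (Or.inl (ι.injective h))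
    · exact Or.inr (Or.inr h)
  · intro w
    have h1 : #{x // r x w} ≤ #{a : κ.ord.ToType // a < ι w} := by
      refine Cardinal.mk_le_of_injective (f := fun x => ⟨ι x.1, x.2⟩) ?_
      rintro ⟨a, ha⟩ ⟨b, hb⟩ hab
      simp only [Subtype.mk.injEq] at hab
      exact Subtype.ext (ι.injective hab)
    have h2 : #{a : κ.ord.ToType // a < ι w} < κ := by
      haveI h := isWellOrder_lt (α := κ.ord.ToType)
      have hc := Ordinal.card_typein (r := ((· < ·) : κ.ord.ToType → κ.ord.ToType → Prop)) (ι w)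
      rw [← hc, ← Cardinal.lt_ord]
      exact Ordinal.typein_lt_self (ι w)
    exact h1.trans_lt h2

section Components

variable {W : Type u} (G : SimpleGraph W)

/-- Balls around `v0`. -/
def ballSet (v0 : W) : ℕ → Set W
  | 0 => {v0}
  | n + 1 => ballSet v0 n ∪ ⋃ x ∈ ballSet v0 n, G.neighborSet x

theorem ballSet_mono (v0 : W) {m n : ℕ} (h : m ≤ n) : ballSet G v0 m ⊆ ballSet G v0 n := by
  induction n with
  | zero => rw [Nat.le_zero.mp h]
  | succ n ih =>
    rcases Nat.lt_or_ge m (n+1) with h' | h'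
    · exact (ih (Nat.lt_succ_iff.mp h')).trans Set.subset_union_left
    · rw [Nat.le_antisymm h h']

theorem mem_ballSet_of_walk (v0 : W) {w : W} (p : G.Walk w v0) :
    w ∈ ballSet G v0 p.length := by
  induction p with
  | nil => exact Set.mem_singleton _
  | cons h q ih =>
    refine Set.mem_union_right _ ?_
    exact Set.mem_biUnion ih (by exact h.symm)

theorem mk_ballSet_le (v0 : W) {κ : Cardinal.{u}} (hκ : ℵ₀ ≤ κ)
    (hdeg : ∀ v : W, #(G.neighborSet v) ≤ κ) (n : ℕ) : #(ballSet G v0 n) ≤ κ := by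
  induction n with
  | zero =>
    simp only [ballSet, Cardinal.mk_singleton]
    exact le_trans (by exact_mod_cast Cardinal.nat_lt_aleph0 1 |>.le) hκ
  | succ n ih =>
    have h1 : #(⋃ x ∈ ballSet G v0 n, G.neighborSet x) ≤ κ := by
      refine le_trans (Cardinal.mk_biUnion_le _ _) ?_
      rcases isEmpty_or_nonempty (ballSet G v0 n) with h | h
      · simp [Cardinal.mk_eq_zero_iff.mpr h]
      · refine le_trans (mul_le_mul' ih (ciSup_le' fun x => hdeg x.1)) ?_
        rw [Cardinal.mul_eq_self hκ]
    calc #(ballSet G v0 (n+1)) ≤ #(ballSet G v0 n) + _ := Cardinal.mk_union_le _ _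
      _ ≤ κ + κ := add_le_add ih h1
      _ = κ := Cardinal.add_eq_self hκ

theorem mk_reachableSet_le (v0 : W) {κ : Cardinal.{u}} (hκ : ℵ₀ ≤ κ)
    (hdeg : ∀ v : W, #(G.neighborSet v) ≤ κ) : #{w | G.Reachable v0 w} ≤ κ := by
  have hsub : {w | G.Reachable v0 w} ⊆ ⋃ n : ULift.{u} ℕ, ballSet G v0 n.down := by
    intro w hw
    obtain ⟨p⟩ := hw.symm
    exact Set.mem_iUnion.mpr ⟨⟨p.length⟩, mem_ballSet_of_walk G v0 p⟩
  refine le_trans (mk_le_mk_of_subset hsub) (le_trans (Cardinal.mk_iUnion_le _) ?_)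
  have h1 : #(ULift.{u} ℕ) = ℵ₀ := by simp
  rw [h1]
  refine le_trans (mul_le_mul' hκ (ciSup_le' fun n => mk_ballSet_le G v0 hκ hdeg n.down)) ?_
  rw [Cardinal.mul_eq_self hκ]

end Components

/-- Infinite case: `κ`-regular graphs with `κ` infinite have perfect matchings. -/
theorem infinite_regular_perfect_matching {W : Type u} (G : SimpleGraph W)
    {κ : Cardinal.{u}} (hκ : ℵ₀ ≤ κ) (hreg : ∀ v : W, #(G.neighborSet v) = κ) :
    ∃ M : Set (Sym2 W), IsMatchingSet G M ∧ ∀ v : W, ∃ e ∈ M, v ∈ e := by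
  classical
  -- each component's induced graph has a perfect matching
  have hsupp_closed : ∀ (c : G.ConnectedComponent) (v w : W),
      v ∈ c.supp → G.Adj v w → w ∈ c.supp := by
    intro c v w hv hadj
    rw [SimpleGraph.ConnectedComponent.mem_supp_iff] at hv ⊢
    rw [← hv]
    exact (SimpleGraph.ConnectedComponent.connectedComponentMk_eq_of_adj hadj).symm
  have key : ∀ c : G.ConnectedComponent,
      ∃ M : Set (Sym2 c.supp), IsMatchingSet (G.induce c.supp) M ∧
        ∀ v : c.supp, ∃ e ∈ M, v ∈ e := by
    intro c
    refine small_regular_perfect_matching _ hκ ?_ ?_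
    · intro v
      rw [← hreg v.1]
      refine Cardinal.mk_congr ?_
      exact
        { toFun := fun b => ⟨b.1.1, b.2⟩
          invFun := fun u => ⟨⟨u.1, hsupp_closed c v.1 u.1 v.2 u.2⟩, u.2⟩
          left_inv := fun b => by ext; rfl
          right_inv := fun u => by ext; rfl }
    · obtain ⟨v0, rfl⟩ := c.exists_rep
      refine le_trans (mk_le_mk_of_subset (t := {w | G.Reachable v0 w}) ?_)
        (mk_reachableSet_le G v0 hκ fun v => (hreg v).le)
      intro w hw
      change G.connectedComponentMk w = G.connectedComponentMk v0 at hw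
      exact (SimpleGraph.ConnectedComponent.eq.mp hw).symm
  choose Mc hMc hMcov using key
  refine ⟨⋃ c : G.ConnectedComponent, Sym2.map Subtype.val '' Mc c, ⟨?_, ?_⟩, ?_⟩
  · rintro e he
    obtain ⟨c, he⟩ := Set.mem_iUnion.mp he
    obtain ⟨e', he', rfl⟩ := he
    have := (hMc c).1 he'
    induction e' with
    | _ a b => exact this
  · rintro e he f hf hef v hve hvf
    obtain ⟨c, he⟩ := Set.mem_iUnion.mp he
    obtain ⟨e', he', hee⟩ := he
    obtain ⟨c', hf⟩ := Set.mem_iUnion.mp hf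
    obtain ⟨f', hf', hff⟩ := hf
    subst hee
    subst hff
    obtain ⟨a, hae, ha⟩ := Sym2.mem_map.mp hve
    obtain ⟨b, hbf, hb⟩ := Sym2.mem_map.mp hvf
    by_cases hcc : c = c'
    · subst hcc
      have hne : e' ≠ f' := fun h => hef (by rw [h])
      have := (hMc c).2 he' hf' hne a hae
      have hab : a = b := Subtype.ext (by rw [ha, hb])
      exact this (hab ▸ hbf)
    · have h1 : v ∈ c.supp := ha ▸ a.2
      have h2 : v ∈ c'.supp := hb ▸ b.2
      rw [SimpleGraph.ConnectedComponent.mem_supp_iff] at h1 h2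
      exact hcc (h1.symm.trans h2)
  · intro v
    set c := G.connectedComponentMk v with hc
    have hv : v ∈ c.supp := rfl
    obtain ⟨e', he', hve'⟩ := hMcov c ⟨v, hv⟩
    exact ⟨Sym2.map Subtype.val e', Set.mem_iUnion.mpr ⟨c, Set.mem_image_of_mem _ he'⟩,
      Sym2.mem_map.mpr ⟨⟨v, hv⟩, hve', rfl⟩⟩

open Set Function in
/-- Schröder–Bernstein with control on the bijection: at every point it agrees
with `f` or is a right inverse of `g`. -/
theorem csb_adapted {α β : Type*} [Nonempty β] {f : α → β} {g : β → α}
    (hf : Function.Injective f) (hg : Function.Injective g) :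
    ∃ h : α → β, Function.Bijective h ∧ ∀ a, h a = f a ∨ g (h a) = a := by
  classical
  set F : Set α →o Set α :=
    { toFun := fun s => (g '' (f '' s)ᶜ)ᶜ
      monotone' := fun s t hst =>
        compl_subset_compl.mpr <| image_mono <| compl_subset_compl.mpr <| image_mono hst }
  set s : Set α := F.lfp
  have hs : (g '' (f '' s)ᶜ)ᶜ = s := F.map_lfp
  have hns : g '' (f '' s)ᶜ = sᶜ := compl_injective (by simp [hs])
  set g' := invFun g
  have g'g : LeftInverse g' g := leftInverse_invFun hg
  have hg'ns : g' '' sᶜ = (f '' s)ᶜ := by rw [← hns, g'g.image_image]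
  set h : α → β := s.piecewise f g'
  have hsurj : Surjective h := by rw [← range_eq_univ, range_piecewise, hg'ns, union_compl_self]
  have hinj : Injective h := by
    refine (injective_piecewise_iff _).2 ⟨hf.injOn, ?_, ?_⟩
    · intro x hx y hy hxy
      obtain ⟨x', _, rfl⟩ : x ∈ g '' (f '' s)ᶜ := by rwa [hns]
      obtain ⟨y', _, rfl⟩ : y ∈ g '' (f '' s)ᶜ := by rwa [hns]
      rw [g'g _, g'g _] at hxy
      rw [hxy]
    · intro x hx y hy hxy
      obtain ⟨y', hy', rfl⟩ : y ∈ g '' (f '' s)ᶜ := by rwa [hns]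
      rw [g'g _] at hxy
      exact hy' ⟨x, hx, hxy⟩
  refine ⟨h, ⟨hinj, hsurj⟩, fun a => ?_⟩
  by_cases ha : a ∈ s
  · exact Or.inl (s.piecewise_eq_of_mem f g' ha)
  · right
    obtain ⟨b, _, rfl⟩ : a ∈ g '' (f '' s)ᶜ := by rwa [hns]
    have hhb : h (g b) = g' (g b) := s.piecewise_eq_of_notMem f g' ha
    rw [hhb, g'g b]

/-- Hall-type selection for one side of a finitely-regular graph. -/
theorem exists_injective_neighbor {V : Type u} (G : SimpleGraph V) (A B : Set V)
    (hAB : ∀ ⦃a w : V⦄, a ∈ A → G.Adj a w → w ∈ B) {n : ℕ} (hn : 0 < n)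
    (hdeg : ∀ v : V, #(G.neighborSet v) = n) :
    ∃ f : A → B, Function.Injective f ∧ ∀ x : A, G.Adj x (f x) := by
  classical
  haveI hfin : ∀ v : V, Fintype (G.neighborSet v) := by
    intro v
    have : Finite (G.neighborSet v) := by
      rw [← Cardinal.lt_aleph0_iff_finite, hdeg v]
      exact Cardinal.nat_lt_aleph0 n
    exact Fintype.ofFinite _
  have hcard : ∀ v : V, (G.neighborFinset v).card = n := by
    intro v
    have h1 : #(G.neighborSet v) = Fintype.card (G.neighborSet v) := Cardinal.mk_fintype _
    rw [hdeg v] at h1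
    have h2 : Fintype.card (G.neighborSet v) = n := by exact_mod_cast h1.symm
    rw [SimpleGraph.neighborFinset, Set.toFinset_card, h2]
  set t : A → Finset V := fun a => G.neighborFinset a.1 with ht
  have hall : ∀ s : Finset A, s.card ≤ (s.biUnion t).card := by
    intro s
    set P : Finset (A × V) := s.biUnion fun a => (t a).image fun y => (a, y) with hP
    have hPcard : P.card = s.card * n := by
      rw [hP, Finset.card_biUnion]
      · rw [Finset.sum_congr rfl fun a _ => ?_, Finset.sum_const, smul_eq_mul]
        rw [Finset.card_image_of_injective _ fun y z hyz => (Prod.mk.injEq _ _ _ _).mp hyz |>.2,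
          ht, hcard]
      · intro a _ b _ hab
        simp only [Finset.disjoint_left, Finset.mem_image]
        rintro ⟨p, q⟩ ⟨y, _, hy⟩ ⟨z, _, hz⟩
        exact hab ((Prod.ext_iff.mp hy).1.trans (Prod.ext_iff.mp hz).1.symm)
    set Q : V → Finset (A × V) := fun y => (s.filter fun a => G.Adj a.1 y).image fun a => (a, y)
      with hQ
    have hPsub : P ⊆ (s.biUnion t).biUnion Q := by
      intro p hp
      rw [hP, Finset.mem_biUnion] at hp
      obtain ⟨a, ha, hpa⟩ := hp
      rw [Finset.mem_image] at hpa
      obtain ⟨y, hy, rfl⟩ := hpa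
      rw [ht, SimpleGraph.mem_neighborFinset] at hy
      refine Finset.mem_biUnion.mpr ⟨y, Finset.mem_biUnion.mpr ⟨a, ha, ?_⟩, ?_⟩
      · rw [ht, SimpleGraph.mem_neighborFinset]; exact hy
      · rw [hQ, Finset.mem_image]
        exact ⟨a, Finset.mem_filter.mpr ⟨ha, hy⟩, rfl⟩
    have hQcard : ∀ y : V, (Q y).card ≤ n := by
      intro y
      rw [hQ]
      refine le_trans (Finset.card_image_le) (le_trans ?_ (hcard y).le)
      refine Finset.card_le_card_of_injOn (fun a => a.1) ?_ ?_
      · intro a ha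
        rw [Finset.mem_coe, SimpleGraph.mem_neighborFinset]
        exact (Finset.mem_filter.mp ha).2.symm
      · intro a _ b _ hab
        exact Subtype.ext hab
    have h2 : P.card ≤ (s.biUnion t).card * n := by
      refine le_trans (Finset.card_le_card hPsub) (le_trans (Finset.card_biUnion_le) ?_)
      refine le_trans (Finset.sum_le_sum fun y _ => hQcard y) ?_
      rw [Finset.sum_const, smul_eq_mul]
    rw [hPcard] at h2
    exact Nat.le_of_mul_le_mul_right h2 hn
  obtain ⟨f, hfinj, hf⟩ := (Finset.all_card_le_biUnion_card_iff_exists_injective t).mp hall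
  have hadj : ∀ x : A, G.Adj x.1 (f x) := by
    intro x
    have := hf x
    rwa [ht, SimpleGraph.mem_neighborFinset] at this
  refine ⟨fun x => ⟨f x, hAB x.2 (hadj x)⟩, ?_, hadj⟩
  intro x y hxy
  exact hfinj (by simpa using hxy)

/-- Every regular bipartite simple graph (every vertex of degree `κ`, for some
fixed cardinal `κ > 0`) admits a perfect matching. -/
theorem regular_bipartite_has_perfect_matching {V : Type u}
    (G : SimpleGraph V) (X Y : Set V) (hdisj : Disjoint X Y)
    (hunion : X ∪ Y = Set.univ)
    (hbip : ∀ ⦃u v : V⦄, G.Adj u v → (u ∈ X ∧ v ∈ Y) ∨ (u ∈ Y ∧ v ∈ X))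
    (κ : Cardinal.{u}) (hκ : κ ≠ 0)
    (hreg : ∀ v : V, #(G.neighborSet v) = κ) :
    ∃ M : Set (Sym2 V), IsMatchingSet G M ∧ ∀ v : V, ∃ e ∈ M, v ∈ e := by
  classical
  rcases isEmpty_or_nonempty V with hV | hV
  · exact ⟨∅, ⟨by simp, Set.pairwise_empty _⟩, fun v => (IsEmpty.false v).elim⟩
  rcases le_or_gt ℵ₀ κ with hinf | hfin
  · exact infinite_regular_perfect_matching G hinf hreg
  -- finite degree case
  obtain ⟨n, rfl⟩ := Cardinal.lt_aleph0.mp hfin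
  have hn : 0 < n := by
    rcases Nat.eq_zero_or_pos n with rfl | h
    · exact absurd (by norm_num) hκ
    · exact h
  -- both sides are nonempty
  have hmemXY : ∀ v : V, v ∈ X ∨ v ∈ Y := fun v => by
    have : v ∈ X ∪ Y := by rw [hunion]; exact Set.mem_univ v
    exact this
  obtain ⟨hX, hY⟩ : Nonempty X ∧ Nonempty Y := by
    obtain ⟨v⟩ := hV
    have hne : (G.neighborSet v).Nonempty := by
      rw [← Set.nonempty_coe_sort, ← Cardinal.mk_ne_zero_iff, hreg v]
      exact_mod_cast Nat.pos_iff_ne_zero.mp hn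
    obtain ⟨u, hu⟩ := hne
    rcases hbip hu with ⟨h1, h2⟩ | ⟨h1, h2⟩
    · exact ⟨⟨⟨v, h1⟩⟩, ⟨⟨u, h2⟩⟩⟩
    · exact ⟨⟨⟨u, h2⟩⟩, ⟨⟨v, h1⟩⟩⟩
  have hXside : ∀ ⦃a w : V⦄, a ∈ X → G.Adj a w → w ∈ Y := by
    intro a w ha h
    rcases hbip h with ⟨_, h2⟩ | ⟨h1, _⟩
    · exact h2
    · exact absurd h1 (Set.disjoint_left.mp hdisj ha)
  have hYside : ∀ ⦃a w : V⦄, a ∈ Y → G.Adj a w → w ∈ X := by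
    intro a w ha h
    rcases hbip h with ⟨h1, _⟩ | ⟨_, h2⟩
    · exact absurd ha (Set.disjoint_left.mp hdisj h1)
    · exact h2
  obtain ⟨f, hfinj, hfadj⟩ := exists_injective_neighbor G X Y hXside hn hreg
  obtain ⟨g, hginj, hgadj⟩ := exists_injective_neighbor G Y X hYside hn hreg
  obtain ⟨h, hbij, hprop⟩ := csb_adapted hfinj hginj
  have hadj : ∀ x : X, G.Adj x.1 (h x).1 := by
    intro x
    rcases hprop x with hx | hx
    · rw [hx]; exact hfadj x
    · have := hgadj (h x)
      rw [hx] at this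
      exact this.symm
  refine ⟨Set.range fun x : X => s(x.1, (h x).1), ⟨?_, ?_⟩, ?_⟩
  · rintro e ⟨x, rfl⟩
    exact hadj x
  · rintro e ⟨x, rfl⟩ e' ⟨x', rfl⟩ hee v hv hv'
    have hxx : x ≠ x' := fun hc => hee (by rw [hc])
    rcases Sym2.mem_iff.mp hv with rfl | rfl <;> rcases Sym2.mem_iff.mp hv' with h1 | h1
    · exact hxx (Subtype.ext h1)
    · exact Set.disjoint_left.mp hdisj x.2 (h1 ▸ (h x').2)
    · exact Set.disjoint_left.mp hdisj x'.2 (h1 ▸ (h x).2)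
    · exact hxx (hbij.1 (Subtype.ext h1))
  · intro v
    rcases hmemXY v with hv | hv
    · exact ⟨s(v, (h ⟨v, hv⟩).1), ⟨⟨v, hv⟩, rfl⟩, Sym2.mem_mk_left _ _⟩
    · obtain ⟨x, hx⟩ := hbij.2 ⟨v, hv⟩
      refine ⟨s(x.1, (h x).1), ⟨x, rfl⟩, ?_⟩
      rw [hx]
      exact Sym2.mem_mk_right _ _
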